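/- Let n ≥ 1 be an integer, let â, ê ∈ ℝⁿ, let δ, γ ∈ ℝ, and let s > 0 be a real number with (1/n)·êᵀê < s + 1. Consider the (n+2)×(n+2) real symmetric matrix M whose top-left n×n block is the identity matrix Iₙ, whose (n+1)-st column (restricted to the first n rows) is ê and whose (n+2)-nd column (restricted to the first n rows) is â, with the symmetric entries in the last two rows, and whose bottom-right 2×2 block is the diagonal matrix with entries n·(s + 1) and n·(γ − δ); i.e. M = [[Iₙ, ê, â], [êᵀ, n(s+1), 0], [âᵀ, 0, n(γ − δ)]]. Then M is positive semidefinite if and only if (1/n)·âᵀâ + ((1/n)·âᵀê)² / (s + 1 − (1/n)·êᵀê) + δ ≤ γ. -/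

import Mathlib

open Matrix

lemma psd_fin_two {a b c : ℝ} (ha : 0 < a) :
    (!![a, b; b, c] : Matrix (Fin 2) (Fin 2) ℝ).PosSemidef ↔ b ^ 2 ≤ a * c := by
  constructor
  · intro h
    have := h.dotProduct_mulVec_nonneg ![-b, a]
    simp [Matrix.mulVec, dotProduct, Fin.sum_univ_two] at this
    nlinarith
  · intro h
    refine Matrix.PosSemidef.of_dotProduct_mulVec_nonneg (by ext i j; fin_cases i <;> fin_cases j <;> simp) fun x => ?_
    have key : star x ⬝ᵥ (!![a, b; b, c] : Matrix (Fin 2) (Fin 2) ℝ) *ᵥ x =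
        a * x 0 ^ 2 + 2 * b * x 0 * x 1 + c * x 1 ^ 2 := by
      simp [Matrix.mulVec, dotProduct, Fin.sum_univ_two]
      ring
    rw [key]
    have h1 : 0 ≤ (a * x 0 + b * x 1) ^ 2 + (a * c - b ^ 2) * x 1 ^ 2 := by
      have := sq_nonneg (x 1)
      nlinarith [sq_nonneg (a * x 0 + b * x 1)]
    have h2 : a * (a * x 0 ^ 2 + 2 * b * x 0 * x 1 + c * x 1 ^ 2) =
        (a * x 0 + b * x 1) ^ 2 + (a * c - b ^ 2) * x 1 ^ 2 := by ring
    nlinarith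

/-- Semidefinite-programming reformulation (two Schur complement steps):
the LMI (29) is equivalent to the scalar inequality `ρₙ(â,ê) + δ ≤ γ`. -/
theorem stmt_9 (n : ℕ) (hn : 1 ≤ n) (ahat ehat : Fin n → ℝ) (δ γ s : ℝ)
    (hs : 0 < s)
    (hE : (1 / (n : ℝ)) * (ehat ⬝ᵥ ehat) < s + 1) :
    (Matrix.fromBlocks (1 : Matrix (Fin n) (Fin n) ℝ)
        (Matrix.of fun i (j : Fin 2) => if j = 0 then ehat i else ahat i)
        (Matrix.of fun (j : Fin 2) i => if j = 0 then ehat i else ahat i)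
        !![(n : ℝ) * (s + 1), 0; 0, (n : ℝ) * (γ - δ)]).PosSemidef ↔
      (1 / (n : ℝ)) * (ahat ⬝ᵥ ahat) +
          ((1 / (n : ℝ)) * (ahat ⬝ᵥ ehat)) ^ 2 /
            (s + 1 - (1 / (n : ℝ)) * (ehat ⬝ᵥ ehat)) + δ ≤ γ := by
  have hn0 : (0 : ℝ) < n := by exact_mod_cast hn
  set N := (n : ℝ) with hN
  set B : Matrix (Fin n) (Fin 2) ℝ :=
    Matrix.of fun i (j : Fin 2) => if j = 0 then ehat i else ahat i with hB
  set D : Matrix (Fin 2) (Fin 2) ℝ := !![N * (s + 1), 0; 0, N * (γ - δ)] with hD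
  have hC : (Matrix.of fun (j : Fin 2) i => if j = 0 then ehat i else ahat i) = Bᴴ := by
    ext j i; simp [hB, Matrix.conjTranspose_apply]
  rw [hC]
  have hone : (1 : Matrix (Fin n) (Fin n) ℝ).PosDef := Matrix.PosDef.one
  haveI : Invertible (1 : Matrix (Fin n) (Fin n) ℝ) := invertibleOne
  rw [Matrix.PosDef.fromBlocks₁₁ B D hone]
  have hschur : D - Bᴴ * (1 : Matrix (Fin n) (Fin n) ℝ)⁻¹ * B =
      !![N * (s + 1) - ehat ⬝ᵥ ehat, -(ahat ⬝ᵥ ehat);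
        -(ahat ⬝ᵥ ehat), N * (γ - δ) - ahat ⬝ᵥ ahat] := by
    rw [inv_one, Matrix.mul_one]
    ext j k
    fin_cases j <;> fin_cases k <;>
      simp [hD, hB, Matrix.mul_apply, Matrix.conjTranspose_apply, dotProduct,
        mul_comm] <;> ring_nf <;> simp [dotProduct, mul_comm]
  rw [hschur]
  have hNne : N ≠ 0 := ne_of_gt hn0
  have hE' : 0 < N * (s + 1) - ehat ⬝ᵥ ehat := by
    have hE2 : ehat ⬝ᵥ ehat / N < s + 1 := by
      rw [div_eq_mul_one_div, mul_comm]; exact hE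
    have h3 := (div_lt_iff₀ hn0).mp hE2
    linarith
  rw [psd_fin_two hE']
  have hd : 0 < s + 1 - (1 / N) * (ehat ⬝ᵥ ehat) := by linarith
  rw [neg_pow, neg_one_sq, one_mul]
  have hP : (ahat ⬝ᵥ ehat) ^ 2 = N ^ 2 * ((1 / N) * (ahat ⬝ᵥ ehat)) ^ 2 := by
    field_simp
  have hprod : (N * (s + 1) - ehat ⬝ᵥ ehat) * (N * (γ - δ) - ahat ⬝ᵥ ahat) =
      N ^ 2 * ((γ - δ - (1 / N) * (ahat ⬝ᵥ ahat)) * (s + 1 - (1 / N) * (ehat ⬝ᵥ ehat))) := by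
    field_simp
  rw [hP, hprod, mul_le_mul_iff_right₀ (by positivity : (0:ℝ) < N ^ 2)]
  rw [← div_le_iff₀ hd]
  constructor <;> intro h <;> linarith
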